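/- Let G be a finite group, N a normal subgroup of G, and k, ℓ ∈ ℕ. Then d_k(N) + d_ℓ(G/N) ≤ d_{k+ℓ−1}(G). -/

import Mathlib

/-- `S` is a product-one sequence over `G`: some ordering of its terms multiplies to `1`. -/
def IsProductOne {G : Type*} [Group G] (S : Multiset G) : Prop :=
  ∃ l : List G, (l : Multiset G) = S ∧ l.prod = 1

/-- The set of products `π(S)` of all orderings of the terms of `S`. -/
def piSet {G : Type*} [Group G] (S : Multiset G) : Set G :=
  {g | ∃ l : List G, (l : Multiset G) = S ∧ l.prod = g}

/-- The set `Π(S)` of products of nontrivial subsequences of `S`. -/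
def subseqProds {G : Type*} [Group G] (S : Multiset G) : Set G :=
  {g | ∃ T : Multiset G, T ≤ S ∧ T ≠ 0 ∧ g ∈ piSet T}

/-- `S` is product-one free. -/
def ProductOneFree {G : Type*} [Group G] (S : Multiset G) : Prop :=
  (1 : G) ∉ subseqProds S

/-- `S` is an atom of the monoid `B(G)` of product-one sequences: it is a nontrivial
product-one sequence that is not the concatenation of two nontrivial product-one sequences. -/
def IsPOAtom {G : Type*} [Group G] (S : Multiset G) : Prop :=
  IsProductOne S ∧ S ≠ 0 ∧
    ∀ T₁ T₂ : Multiset G, IsProductOne T₁ → IsProductOne T₂ → T₁ + T₂ = S →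
      T₁ = 0 ∨ T₂ = 0

/-- The large Davenport constant `D(G)`: the supremum of lengths of atoms of `B(G)`. -/
noncomputable def largeD (G : Type*) [Group G] : ℕ :=
  sSup {n : ℕ | ∃ S : Multiset G, IsPOAtom S ∧ Multiset.card S = n}

/-- The small Davenport constant `d(G)`: the supremum of lengths of product-one free
sequences over `G`. -/
noncomputable def smalld (G : Type*) [Group G] : ℕ :=
  sSup {n : ℕ | ∃ S : Multiset G, ProductOneFree S ∧ Multiset.card S = n}
/-- `S` is divisible in `F(G)` by a concatenation of `k` nontrivial product-one sequences. -/
def DividesKProducts {G : Type*} [Group G] (k : ℕ) (S : Multiset G) : Prop :=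
  ∃ f : Fin k → Multiset G,
    (∀ i, f i ≠ 0 ∧ IsProductOne (f i)) ∧ (∑ i, f i) ≤ S

/-- The small `k`-th Davenport constant `d_k(G)`. -/
noncomputable def smalldk (G : Type*) [Group G] (k : ℕ) : ℕ :=
  sSup {n : ℕ | ∃ S : Multiset G, ¬ DividesKProducts k S ∧ Multiset.card S = n}

/-- Every factorization of `S` into nontrivial product-one sequences has at most `k` factors. -/
def MaxFactLe {G : Type*} [Group G] (k : ℕ) (S : Multiset G) : Prop :=
  ∀ (m : ℕ) (f : Fin m → Multiset G),
    (∀ i, f i ≠ 0 ∧ IsProductOne (f i)) → (∑ i, f i) = S → m ≤ k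

/-- The large `k`-th Davenport constant `D_k(G)`. -/
noncomputable def largeDk (G : Type*) [Group G] (k : ℕ) : ℕ :=
  sSup {n : ℕ | ∃ S : Multiset G, IsProductOne S ∧ MaxFactLe k S ∧ Multiset.card S = n}

set_option linter.unusedSectionVars false

open Multiset

namespace Stmt9Aux

variable {G : Type*} [Group G] {H : Type*} [Group H]

lemma isProductOne_map (f : G →* H) {S : Multiset G}
    (h : IsProductOne S) : IsProductOne (S.map f) := by
  obtain ⟨l, hl, hp⟩ := h
  refine ⟨l.map f, by rw [← hl]; simp, ?_⟩
  rw [← map_list_prod f l, hp, map_one]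

lemma isProductOne_of_map (f : G →* H) (hf : Function.Injective f)
    {S : Multiset G} (h : IsProductOne (S.map f)) : IsProductOne S := by
  obtain ⟨l, hl, hp⟩ := h
  have hmem : ∀ a ∈ l, a ∈ Set.range f := by
    intro a ha
    have : a ∈ S.map f := by rw [← hl]; exact_mod_cast ha
    obtain ⟨b, _, rfl⟩ := Multiset.mem_map.1 this
    exact ⟨b, rfl⟩
  set g : H → G := Function.invFun f with hg
  have hfg : ∀ a ∈ l, f (g a) = a := by
    intro a ha
    exact Function.invFun_eq (hmem a ha)
  have hmapfg : (l.map g).map f = l := by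
    rw [List.map_map]
    exact List.map_congr_left (by intro a ha; exact hfg a ha) |>.trans (List.map_id l)
  refine ⟨l.map g, ?_, ?_⟩
  · apply Multiset.map_injective hf
    rw [← hl, Multiset.map_coe]
    exact congrArg _ hmapfg
  · apply hf
    rw [map_list_prod f, hmapfg, hp, map_one]

lemma exists_preimage_of_le_map (f : G →* H) (hf : Function.Injective f)
    {T : Multiset H} {S : Multiset G} (h : T ≤ S.map f) : ∃ T' ≤ S, T'.map f = T := by
  classical
  induction T using Multiset.induction generalizing S with
  | empty => exact ⟨0, Multiset.zero_le _, rfl⟩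
  | cons a T ih =>
    have ha : a ∈ S.map f := mem_of_le h (mem_cons_self a T)
    obtain ⟨b, hb, rfl⟩ := Multiset.mem_map.1 ha
    have h' : T ≤ (S.erase b).map f := by
      rw [Multiset.map_erase f hf b S]
      rw [← Multiset.erase_cons_head (f b) T]
      exact Multiset.erase_le_erase _ h
    obtain ⟨T', hT'le, hT'⟩ := ih h'
    refine ⟨b ::ₘ T', ?_, by rw [Multiset.map_cons, hT']⟩
    calc b ::ₘ T' ≤ b ::ₘ S.erase b := cons_le_cons b hT'le
    _ = S := Multiset.cons_erase hb

lemma isProductOne_of_cons_one {X : Multiset G} (h : IsProductOne ((1:G) ::ₘ X)) :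
    IsProductOne X := by
  obtain ⟨l, hl, hp⟩ := h
  have h1 : (1:G) ∈ l := by
    rw [← Multiset.mem_coe, hl]; exact mem_cons_self _ _
  obtain ⟨u, v, rfl⟩ := List.append_of_mem h1
  refine ⟨u ++ v, ?_, ?_⟩
  · have : ((u ++ 1 :: v : List G) : Multiset G) = (1:G) ::ₘ (↑(u ++ v) : Multiset G) := by
      simp [Multiset.cons_swap]
    rw [this] at hl
    exact (Multiset.cons_inj_right _).1 hl
  · simpa using hp

lemma isProductOne_of_add_ones {A X : Multiset G} (hA : ∀ a ∈ A, a = (1:G))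
    (h : IsProductOne (A + X)) : IsProductOne X := by
  induction A using Multiset.induction with
  | empty => simpa using h
  | cons a A ih =>
    have ha : a = 1 := hA a (mem_cons_self a A)
    rw [Multiset.cons_add, ha] at h
    exact ih (fun b hb => hA b (mem_cons_of_mem hb)) (isProductOne_of_cons_one h)

lemma split_sum {m : ℕ} (T : Fin m → Multiset G) (X Y : Multiset G)
    (h : ∑ i, T i ≤ X + Y) : ∃ A B : Fin m → Multiset G,
    (∀ i, A i + B i = T i) ∧ ∑ i, A i ≤ X ∧ ∑ i, B i ≤ Y := by
  classical
  induction m generalizing X Y with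
  | zero => exact ⟨fun _ => 0, fun _ => 0, fun i => i.elim0, by simp, by simp⟩
  | succ n ih =>
    rw [Fin.sum_univ_succ] at h
    have hT0 : T 0 ≤ X + Y := le_trans (le_add_right _ _) h
    set A0 := T 0 ∩ X with hA0
    set B0 := T 0 - X with hB0
    have hAB0 : A0 + B0 = T 0 := by
      ext a
      simp only [hA0, hB0, Multiset.count_add, Multiset.count_inter, Multiset.count_sub]
      omega
    have hA0le : A0 ≤ X := inter_le_right
    have hB0le : B0 ≤ Y := by
      rw [hB0, Multiset.sub_le_iff_le_add]
      exact hT0.trans (le_of_eq (add_comm X Y))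
    have hrest : ∑ i : Fin n, T i.succ ≤ (X - A0) + (Y - B0) := by
      have h2 : ∑ i : Fin n, T i.succ ≤ (X + Y) - T 0 :=
        (le_tsub_iff_left hT0).2 h
      refine le_trans h2 (le_of_eq ?_)
      ext a
      have hc : Multiset.count a (T 0) ≤ Multiset.count a X + Multiset.count a Y := by
        have := Multiset.count_le_of_le a hT0
        simpa using this
      simp only [hA0, hB0, Multiset.count_add, Multiset.count_inter, Multiset.count_sub]
      omega
    obtain ⟨A', B', hab, hA', hB'⟩ := ih (fun i => T i.succ) _ _ hrest
    refine ⟨Fin.cons A0 A', Fin.cons B0 B', ?_, ?_, ?_⟩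
    · intro i
      refine Fin.cases ?_ ?_ i
      · simpa using hAB0
      · intro j; simpa using hab j
    · rw [Fin.sum_cons]
      calc A0 + ∑ i, A' i ≤ A0 + (X - A0) := add_le_add_right hA' _
      _ = X := by rw [add_comm]; exact tsub_add_cancel_of_le hA0le
    · rw [Fin.sum_cons]
      calc B0 + ∑ i, B' i ≤ B0 + (Y - B0) := add_le_add_right hB' _
      _ = Y := by rw [add_comm]; exact tsub_add_cancel_of_le hB0le

lemma exists_po_sub [Finite G] {S : Multiset G} (h : Nat.card G ≤ Multiset.card S) :
    ∃ T, T ≤ S ∧ T ≠ 0 ∧ Multiset.card T ≤ Nat.card G ∧ IsProductOne T := by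
  classical
  cases nonempty_fintype G
  rw [Nat.card_eq_fintype_card] at h ⊢
  obtain ⟨l, hl⟩ : ∃ l : List G, (l : Multiset G) = S := ⟨S.toList, S.coe_toList⟩
  have hlen : Fintype.card G ≤ l.length := by
    rw [← Multiset.coe_card, hl]; exact h
  obtain ⟨i, j, hne, heq⟩ := Fintype.exists_ne_map_eq_of_card_lt
    (fun i : Fin (Fintype.card G + 1) => (l.take i).prod) (by simp)
  wlog hij : (i : ℕ) < (j : ℕ) generalizing i j
  · exact this j i hne.symm heq.symm (by omega; )
  set b : List G := (l.drop i).take (j - i) with hb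
  have hsplit : l.take (j : ℕ) = l.take (i : ℕ) ++ b := by
    rw [hb, List.take_drop, Nat.add_sub_cancel' (le_of_lt hij)]
    conv_lhs => rw [← List.take_append_drop (i:ℕ) (l.take (j:ℕ))]
    rw [List.take_take, min_eq_left (le_of_lt hij)]
  have hbprod : b.prod = 1 := by
    have : (l.take (j:ℕ)).prod = (l.take (i:ℕ)).prod * b.prod := by
      rw [hsplit, List.prod_append]
    rw [← heq] at this
    exact left_eq_mul.1 this
  refine ⟨(b : Multiset G), ?_, ?_, ?_, ⟨b, rfl, hbprod⟩⟩
  · rw [← hl]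
    exact Multiset.coe_le.2 (((List.take_sublist _ _).trans (List.drop_sublist _ _)).subperm)
  · have : b.length = j - i := by
      rw [hb, List.length_take, List.length_drop]
      have hj : (j : ℕ) ≤ l.length := le_trans (by omega) hlen
      omega
    intro h0
    have hnil : b = [] := (Multiset.coe_eq_zero b).1 h0
    rw [hnil] at this
    simp at this
    omega
  · rw [Multiset.coe_card, hb, List.length_take]
    have : (j : ℕ) < Fintype.card G + 1 := j.isLt
    omega

lemma divides_of_card [Finite G] (m : ℕ) {S : Multiset G}
    (h : m * Nat.card G ≤ Multiset.card S) : DividesKProducts m S := by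
  classical
  induction m generalizing S with
  | zero => exact ⟨fun i => i.elim0, fun i => i.elim0, by simp⟩
  | succ n ih =>
    have h1 : Nat.card G ≤ Multiset.card S := le_trans (by nlinarith [Nat.card_pos (α := G)]) h
    obtain ⟨T, hTS, hT0, hTcard, hTpo⟩ := exists_po_sub h1
    have hsub : n * Nat.card G ≤ Multiset.card (S - T) := by
      have := Multiset.card_sub hTS
      have hcs : Multiset.card T ≤ Multiset.card S := Multiset.card_le_card hTS
      have hmul : (n+1) * Nat.card G = n * Nat.card G + Nat.card G := by ring
      omega
    obtain ⟨f, hf, hfsum⟩ := ih hsub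
    refine ⟨Fin.cons T f, ?_, ?_⟩
    · intro i
      refine Fin.cases ?_ ?_ i
      · exact ⟨hT0, hTpo⟩
      · intro j; simpa using hf j
    · rw [Fin.sum_cons]
      calc T + ∑ i, f i ≤ T + (S - T) := add_le_add_right hfsum _
      _ = S := by rw [add_comm]; exact tsub_add_cancel_of_le hTS

lemma bddAbove_set [Finite G] (m : ℕ) :
    BddAbove {n : ℕ | ∃ S : Multiset G, ¬ DividesKProducts m S ∧ Multiset.card S = n} := by
  refine ⟨m * Nat.card G, ?_⟩
  rintro n ⟨S, hS, rfl⟩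
  by_contra hlt
  push_neg at hlt
  exact hS (divides_of_card m (le_of_lt hlt))

lemma le_smalldk [Finite G] {m : ℕ} {S : Multiset G} (h : ¬ DividesKProducts m S) :
    Multiset.card S ≤ smalldk G m :=
  le_csSup (bddAbove_set m) ⟨S, h, rfl⟩

lemma exists_smalldk [Finite G] (m : ℕ) (hm : 1 ≤ m) :
    ∃ S : Multiset G, ¬ DividesKProducts m S ∧ Multiset.card S = smalldk G m := by
  have hne : {n : ℕ | ∃ S : Multiset G, ¬ DividesKProducts m S ∧ Multiset.card S = n}.Nonempty := by
    refine ⟨0, 0, ?_, rfl⟩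
    rintro ⟨f, hf, hsum⟩
    have hi : (⟨0, hm⟩ : Fin m) ∈ (Finset.univ : Finset (Fin m)) := Finset.mem_univ _
    have : f ⟨0, hm⟩ ≤ (0 : Multiset G) :=
      le_trans (Finset.single_le_sum (fun i _ => Multiset.zero_le _) hi) hsum
    exact (hf ⟨0, hm⟩).1 (le_antisymm this (Multiset.zero_le _))
  exact Nat.sSup_mem hne (bddAbove_set m)

end Stmt9Aux

/-- For a normal subgroup `N` of a finite group `G` and `k, ℓ ≥ 1`,
`d_k(N) + d_ℓ(G/N) ≤ d_{k+ℓ-1}(G)`. -/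
theorem stmt9 {G : Type*} [Group G] [Finite G] (N : Subgroup G) [N.Normal]
    (k l : ℕ) (hk : 1 ≤ k) (hl : 1 ≤ l) :
    smalldk ↥N k + smalldk (G ⧸ N) l ≤ smalldk G (k + l - 1) := by
  classical
  obtain ⟨S₁, hS₁, hc₁⟩ := Stmt9Aux.exists_smalldk (G := ↥N) k hk
  obtain ⟨S₂, hS₂, hc₂⟩ := Stmt9Aux.exists_smalldk (G := G ⧸ N) l hl
  set π : G →* G ⧸ N := QuotientGroup.mk' N with hπ
  set X : Multiset G := S₁.map (N.subtype) with hX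
  set Y : Multiset G := S₂.map (fun q => q.out) with hY
  have hmapY : Y.map π = S₂ := by
    rw [hY, Multiset.map_map]
    have : (⇑π ∘ fun q : G ⧸ N => q.out) = id := by
      funext q
      exact QuotientGroup.out_eq' q
    rw [this, Multiset.map_id]
  have hND : ¬ DividesKProducts (k + l - 1) (X + Y) := by
    rintro ⟨T, hT, hsum⟩
    obtain ⟨A, B, hAB, hAX, hBY⟩ := Stmt9Aux.split_sum T X Y hsum
    have hAXle : ∀ i, A i ≤ X := fun i =>
      le_trans (Finset.single_le_sum (fun i _ => Multiset.zero_le _) (Finset.mem_univ i)) hAX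
    have hBpo : ∀ i, IsProductOne ((B i).map π) := by
      intro i
      have h1 : IsProductOne ((T i).map π) := Stmt9Aux.isProductOne_map π (hT i).2
      rw [← hAB i, Multiset.map_add] at h1
      refine Stmt9Aux.isProductOne_of_add_ones ?_ h1
      intro a ha
      obtain ⟨b, hb, rfl⟩ := Multiset.mem_map.1 ha
      have hbA : b ∈ X := Multiset.mem_of_le (hAXle i) hb
      rw [hX] at hbA
      obtain ⟨c, _, rfl⟩ := Multiset.mem_map.1 hbA
      exact (QuotientGroup.eq_one_iff _).2 c.2
    set J : Finset (Fin (k + l - 1)) := Finset.univ.filter (fun i => B i ≠ 0) with hJ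
    have hJcard : J.card < l := by
      by_contra hc
      push_neg at hc
      obtain ⟨J', hJ'sub, hJ'card⟩ := Finset.exists_subset_card_eq hc
      apply hS₂
      set e := J'.orderIsoOfFin hJ'card with he
      refine ⟨fun i => (B (e i)).map π, fun i => ⟨?_, hBpo _⟩, ?_⟩
      · have hmem : (e i : Fin (k + l - 1)) ∈ J := hJ'sub (e i).2
        rw [hJ, Finset.mem_filter] at hmem
        simpa [Multiset.map_eq_zero] using hmem.2
      · have h1 : ∑ i : Fin l, (B (e i)).map π = ∑ j ∈ J', (B j).map π := by
          rw [← Finset.sum_coe_sort J' (fun j => (B j).map π)]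
          exact Fintype.sum_equiv e.toEquiv _ _ (fun i => rfl)
        rw [h1]
        calc ∑ j ∈ J', (B j).map π
            ≤ ∑ j : Fin (k + l - 1), (B j).map π :=
              Finset.sum_le_sum_of_subset (Finset.subset_univ _)
          _ = (∑ j, B j).map π := by
              rw [← Multiset.coe_mapAddMonoidHom (⇑π), ← map_sum]
          _ ≤ Y.map π := Multiset.map_le_map hBY
          _ = S₂ := hmapY
    have hcompl : k ≤ Jᶜ.card := by
      rw [Finset.card_compl]
      simp only [Fintype.card_fin]
      omega
    obtain ⟨K, hKsub, hKcard⟩ := Finset.exists_subset_card_eq hcompl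
    apply hS₁
    choose A' hA'S hA'map using fun i =>
      Stmt9Aux.exists_preimage_of_le_map N.subtype N.subtype_injective (hAXle i)
    set e := K.orderIsoOfFin hKcard with he
    have hBe : ∀ i : Fin k, B (e i) = 0 := by
      intro i
      have hmem : (e i : Fin (k + l - 1)) ∈ Jᶜ := hKsub (e i).2
      rw [Finset.mem_compl, hJ, Finset.mem_filter] at hmem
      push_neg at hmem
      exact hmem (Finset.mem_univ _)
    have hAT : ∀ i : Fin k, A (e i) = T (e i) := by
      intro i
      rw [← hAB (e i), hBe i, add_zero]
    refine ⟨fun i => A' (e i), fun i => ⟨?_, ?_⟩, ?_⟩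
    · intro h0
      have h0' : A' (e i) = 0 := h0
      have hA0 : A (e i) = 0 := by rw [← hA'map (e i), h0']; simp
      exact (hT (e i)).1 (by rw [← hAT i, hA0])
    · apply Stmt9Aux.isProductOne_of_map N.subtype N.subtype_injective
      rw [hA'map (e i), hAT i]
      exact (hT (e i)).2
    · rw [← Multiset.map_le_map_iff N.subtype_injective]
      have hm : (∑ i : Fin k, A' (e i)).map N.subtype = ∑ i : Fin k, A (e i) := by
        rw [← Multiset.coe_mapAddMonoidHom (⇑N.subtype), map_sum]
        simp only [Multiset.coe_mapAddMonoidHom]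
        exact Finset.sum_congr rfl fun i _ => hA'map (e i)
      rw [hm]
      have h1 : ∑ i : Fin k, A (e i) = ∑ j ∈ K, A j := by
        rw [← Finset.sum_coe_sort K A]
        exact Fintype.sum_equiv e.toEquiv _ _ (fun i => rfl)
      rw [h1]
      exact le_trans (Finset.sum_le_sum_of_subset (Finset.subset_univ _)) hAX
  have hcard : Multiset.card (X + Y) = smalldk ↥N k + smalldk (G ⧸ N) l := by
    rw [Multiset.card_add, hX, hY, Multiset.card_map, Multiset.card_map, hc₁, hc₂]
  calc smalldk ↥N k + smalldk (G ⧸ N) l = Multiset.card (X + Y) := hcard.symm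
    _ ≤ smalldk G (k + l - 1) := Stmt9Aux.le_smalldk hND
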